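/- arXiv:2403.19849 — 3 statements merged into one kernel-verified Lean document; each statement's English description precedes it below -/
import Mathlib

section
/- Let F : ℝ^d → ℝ be differentiable, μ-strongly convex and L-smooth with 0 < μ ≤ L, with global minimizer w̃. Fix w ∈ ℝ^d, a stepsize η with 0 ≤ η ≤ 2/(μ+L), and let e be an ℝ^d-valued random vector with E[e] = 0 and E[‖e‖²] ≤ σ². Define the random update w⁺ = w − η(∇F(w) + e). Then E[‖w⁺ − w̃‖²] ≤ (1 − ημ)²·‖w − w̃‖² + η²σ². -/
open MeasureTheory Set InnerProductSpace
open scoped RealInnerProductSpace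

section Aux

variable {E : Type*} [NormedAddCommGroup E] [InnerProductSpace ℝ E] [CompleteSpace E]

private lemma line_hasDerivAt {G : E → ℝ} {g : E → E} (hg : ∀ p, HasGradientAt G (g p) p)
    (x y : E) (t : ℝ) :
    HasDerivAt (fun s : ℝ => G (x + s • (y - x))) ⟪g (x + t • (y - x)), y - x⟫_ℝ t := by
  have h1 : HasDerivAt (fun s : ℝ => x + s • (y - x)) (y - x) t := by
    simpa using ((hasDerivAt_id t).smul_const (y - x)).const_add x
  have h2 := (hg (x + t • (y - x))).hasFDerivAt.comp_hasDerivAt t h1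
  simpa [InnerProductSpace.toDual_apply_apply, Function.comp_def] using h2

private lemma grad_lower {G : E → ℝ} {g : E → E} (hg : ∀ p, HasGradientAt G (g p) p)
    (hG : ConvexOn ℝ univ G) (x y : E) : G x + ⟪g x, y - x⟫_ℝ ≤ G y := by
  have hconv : ConvexOn ℝ univ (fun s : ℝ => G (x + s • (y - x))) := by
    have h := hG.comp_affineMap (AffineMap.lineMap x y)
    have : (fun s : ℝ => G (x + s • (y - x))) = G ∘ (AffineMap.lineMap x y) := by
      funext s
      simp [AffineMap.lineMap_apply, add_comm]
    rw [this]
    simpa using h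
  have hd : ∀ t, HasDerivAt (fun s : ℝ => G (x + s • (y - x)))
      ⟪g (x + t • (y - x)), y - x⟫_ℝ t := line_hasDerivAt hg x y
  have h0 : deriv (fun s : ℝ => G (x + s • (y - x))) 0
      ≤ slope (fun s : ℝ => G (x + s • (y - x))) 0 1 :=
    hconv.deriv_le_slope (mem_univ 0) (mem_univ 1) one_pos (hd 0).differentiableAt
  rw [(hd 0).deriv, slope_def_field] at h0
  simp only [zero_smul, add_zero, one_smul, add_sub_cancel, sub_zero, div_one] at h0
  linarith

private lemma grad_mono {G : E → ℝ} {g : E → E} (hg : ∀ p, HasGradientAt G (g p) p)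
    (hG : ConvexOn ℝ univ G) (x y : E) : 0 ≤ ⟪g x - g y, x - y⟫_ℝ := by
  have h1 := grad_lower hg hG x y
  have h2 := grad_lower hg hG y x
  have e1 : ⟪g x - g y, x - y⟫_ℝ = ⟪g x, x - y⟫_ℝ - ⟪g y, x - y⟫_ℝ := inner_sub_left _ _ _
  have e2 : ⟪g x, x - y⟫_ℝ = -⟪g x, y - x⟫_ℝ := by
    rw [← inner_neg_right, neg_sub]
  linarith [e1, e2]

private lemma mono_to_convex {G : E → ℝ} {g : E → E} (hg : ∀ p, HasGradientAt G (g p) p)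
    (hmono : ∀ x y, 0 ≤ ⟪g x - g y, x - y⟫_ℝ) : ConvexOn ℝ univ G := by
  refine ⟨convex_univ, fun x _ y _ a b ha hb hab => ?_⟩
  set f : ℝ → ℝ := fun s => G (x + s • (y - x)) with hfdef
  have hd : ∀ t, HasDerivAt f ⟪g (x + t • (y - x)), y - x⟫_ℝ t := line_hasDerivAt hg x y
  have hdiff : Differentiable ℝ f := fun t => (hd t).differentiableAt
  have hderiv : deriv f = fun t => ⟪g (x + t • (y - x)), y - x⟫_ℝ :=
    funext fun t => (hd t).deriv
  have hm : Monotone (deriv f) := by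
    rw [hderiv]
    intro s t hst
    rcases eq_or_lt_of_le hst with rfl | hlt
    · exact le_refl _
    · have key := hmono (x + t • (y - x)) (x + s • (y - x))
      have hsub : (x + t • (y - x)) - (x + s • (y - x)) = (t - s) • (y - x) := by
        module
      rw [hsub, real_inner_smul_right, inner_sub_left] at key
      nlinarith [key]
  have hconv : ConvexOn ℝ univ f := hm.convexOn_univ_of_deriv hdiff
  have h := hconv.2 (mem_univ (0:ℝ)) (mem_univ (1:ℝ)) ha hb hab
  simp only [smul_eq_mul, mul_zero, mul_one, zero_add] at h
  have e0 : f 0 = G x := by simp [hfdef]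
  have e1 : f 1 = G y := by simp [hfdef]
  have eb : a • x + b • y = x + b • (y - x) := by
    have h1 : a = 1 - b := by linarith
    subst h1; module
  rw [eb]
  calc G (x + b • (y - x)) = f b := rfl
    _ ≤ a * f 0 + b * f 1 := h
    _ = a • G x + b • G y := by rw [e0, e1]; simp

private lemma descent_lemma {G : E → ℝ} {g : E → E} {C : ℝ}
    (hg : ∀ p, HasGradientAt G (g p) p)
    (hψ : ConvexOn ℝ univ (fun x => C / 2 * ‖x‖ ^ 2 - G x)) (x y : E) :
    G y ≤ G x + ⟪g x, y - x⟫_ℝ + C / 2 * ‖y - x‖ ^ 2 := by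
  have hgψ : ∀ p, HasGradientAt (fun x => C / 2 * ‖x‖ ^ 2 - G x) (C • p - g p) p := by
    intro p
    have h1 : HasFDerivAt (fun x : E => C / 2 * ‖x‖ ^ 2 - G x)
        ((C / 2) • (2 • (innerSL ℝ p)) - (toDual ℝ E) (g p)) p :=
      (((hasStrictFDerivAt_norm_sq p).hasFDerivAt).const_mul (C / 2)).sub
        (hg p).hasFDerivAt
    have h2 : (toDual ℝ E) (C • p - g p) = (C / 2) • (2 • (innerSL ℝ p)) - (toDual ℝ E) (g p) := by
      ext v
      simp [inner_sub_left, real_inner_smul_left]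
      ring
    rw [hasGradientAt_iff_hasFDerivAt, h2]
    exact h1
  have h := grad_lower hgψ hψ x y
  have hinner : ⟪C • x - g x, y - x⟫_ℝ = C * ⟪x, y - x⟫_ℝ - ⟪g x, y - x⟫_ℝ := by
    rw [inner_sub_left, real_inner_smul_left]
  have hn : ‖y - x‖ ^ 2 = ‖y‖ ^ 2 - 2 * ⟪y, x⟫_ℝ + ‖x‖ ^ 2 := norm_sub_sq_real y x
  have hx2 : ⟪x, y - x⟫_ℝ = ⟪x, y⟫_ℝ - ‖x‖ ^ 2 := by
    rw [inner_sub_right, real_inner_self_eq_norm_sq]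
  have hc : ⟪y, x⟫_ℝ = ⟪x, y⟫_ℝ := real_inner_comm x y
  simp only [hinner] at h
  have hq : C / 2 * ‖y - x‖ ^ 2 = C / 2 * ‖y‖ ^ 2 - C / 2 * ‖x‖ ^ 2 - C * ⟪x, y - x⟫_ℝ := by
    linear_combination (C / 2) * hn + C * hx2 - C * hc
  linarith [h, hq]

private lemma cocoercivity {G : E → ℝ} {g : E → E} {C : ℝ} (hC : 0 ≤ C)
    (hg : ∀ p, HasGradientAt G (g p) p) (hG : ConvexOn ℝ univ G)
    (hψ : ConvexOn ℝ univ (fun x => C / 2 * ‖x‖ ^ 2 - G x)) (x y : E) :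
    ‖g x - g y‖ ^ 2 ≤ C * ⟪g x - g y, x - y⟫_ℝ := by
  have step : ∀ a b : E, ∀ t : ℝ,
      G a + ⟪g a, b - a⟫_ℝ + (t - C * t ^ 2 / 2) * ‖g b - g a‖ ^ 2 ≤ G b := by
    intro a b t
    set u := g b - g a with hu
    set z := b - t • u with hz
    have h1 := grad_lower hg hG a z
    have h2 := descent_lemma hg hψ b z
    have hza : z - a = (b - a) - t • u := by rw [hz]; abel
    have hzb : z - b = -(t • u) := by rw [hz]; abel
    have e1 : ⟪g a, z - a⟫_ℝ = ⟪g a, b - a⟫_ℝ - t * ⟪g a, u⟫_ℝ := by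
      rw [hza, inner_sub_right, real_inner_smul_right]
    have e2 : ⟪g b, z - b⟫_ℝ = -(t * ⟪g b, u⟫_ℝ) := by
      rw [hzb, inner_neg_right, real_inner_smul_right]
    have e3 : ‖z - b‖ ^ 2 = t ^ 2 * ‖u‖ ^ 2 := by
      rw [hzb, norm_neg, norm_smul, Real.norm_eq_abs, mul_pow, sq_abs]
    have e4 : ⟪g b, u⟫_ℝ - ⟪g a, u⟫_ℝ = ‖u‖ ^ 2 := by
      rw [← inner_sub_left, ← hu, real_inner_self_eq_norm_sq]
    rw [e1] at h1
    rw [e2, e3] at h2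
    have e5 : t * ⟪g b, u⟫_ℝ - t * ⟪g a, u⟫_ℝ = t * ‖u‖ ^ 2 := by
      linear_combination t * e4
    nlinarith [h1, h2, e5]
  have hsum : ∀ t : ℝ, (2 * t - C * t ^ 2) * ‖g x - g y‖ ^ 2 ≤ ⟪g x - g y, x - y⟫_ℝ := by
    intro t
    have h1 := step x y t
    have h2 := step y x t
    have hnn : ‖g y - g x‖ ^ 2 = ‖g x - g y‖ ^ 2 := by
      rw [← neg_sub (g x) (g y), norm_neg]
    have e1 : ⟪g x, y - x⟫_ℝ = -⟪g x, x - y⟫_ℝ := by rw [← inner_neg_right, neg_sub]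
    have e2 : ⟪g x - g y, x - y⟫_ℝ = ⟪g x, x - y⟫_ℝ - ⟪g y, x - y⟫_ℝ := inner_sub_left _ _ _
    rw [hnn] at h1
    nlinarith [h1, h2, e1, e2]
  rcases eq_or_lt_of_le hC with rfl | hCpos
  · have hN : 0 ≤ ‖g x - g y‖ ^ 2 := by positivity
    rcases eq_or_lt_of_le hN with hN0 | hNpos
    · simp [← hN0]
    · exfalso
      have h := hsum ((⟪g x - g y, x - y⟫_ℝ + 1) / (2 * ‖g x - g y‖ ^ 2))
      have hne : ‖g x - g y‖ ^ 2 ≠ 0 := ne_of_gt hNpos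
      have e : (2 * ((⟪g x - g y, x - y⟫_ℝ + 1) / (2 * ‖g x - g y‖ ^ 2)) -
          0 * ((⟪g x - g y, x - y⟫_ℝ + 1) / (2 * ‖g x - g y‖ ^ 2)) ^ 2) * ‖g x - g y‖ ^ 2 =
          ⟪g x - g y, x - y⟫_ℝ + 1 := by
        rw [zero_mul, sub_zero, mul_div_assoc', div_mul_eq_mul_div,
          div_eq_iff (mul_ne_zero two_ne_zero hne)]
        ring
      rw [e] at h
      linarith
  · have h := hsum (1 / C)
    have hC' : C ≠ 0 := ne_of_gt hCpos
    have e : 2 * (1 / C) - C * (1 / C) ^ 2 = 1 / C := by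
      field_simp
      ring
    rw [e] at h
    have h2 := mul_le_mul_of_nonneg_left h (le_of_lt hCpos)
    calc ‖g x - g y‖ ^ 2 = C * (1 / C * ‖g x - g y‖ ^ 2) := by field_simp
      _ ≤ C * ⟪g x - g y, x - y⟫_ℝ := h2

end Aux

/-- Noisy gradient step. For `F` differentiable, `μ`-strongly convex,
`L`-smooth, minimizer `w̃`, stepsize `0 ≤ η ≤ 2/(μ+L)`, and a zero-mean random vector `e`
with `E[‖e‖²] ≤ σ²`, the update `w⁺ = w − η(∇F(w) + e)` satisfies
`E[‖w⁺ − w̃‖²] ≤ (1 − ημ)²‖w − w̃‖² + η²σ²`. -/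
theorem stmt_2 {d : ℕ} {Ω : Type*} [MeasureSpace Ω] [IsProbabilityMeasure (volume : Measure Ω)]
    (μ L : ℝ) (hμ : 0 < μ) (hμL : μ ≤ L)
    (F : EuclideanSpace ℝ (Fin d) → ℝ)
    (hF : Differentiable ℝ F)
    (hSC : ConvexOn ℝ Set.univ (fun x => F x - μ / 2 * ‖x‖ ^ 2))
    (hSmooth : ∀ x y, ‖gradient F x - gradient F y‖ ≤ L * ‖x - y‖)
    (wtil : EuclideanSpace ℝ (Fin d)) (hmin : ∀ v, F wtil ≤ F v)
    (w : EuclideanSpace ℝ (Fin d))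
    (η : ℝ) (hη0 : 0 ≤ η) (hη : η ≤ 2 / (μ + L))
    (e : Ω → EuclideanSpace ℝ (Fin d))
    (he_int : Integrable e) (he_mean : ∫ ω, e ω = 0)
    (σsq : ℝ) (he_sq_int : Integrable (fun ω => ‖e ω‖ ^ 2))
    (he_var : ∫ ω, ‖e ω‖ ^ 2 ≤ σsq) :
    ∫ ω, ‖w - η • (gradient F w + e ω) - wtil‖ ^ 2 ≤
      (1 - η * μ) ^ 2 * ‖w - wtil‖ ^ 2 + η ^ 2 * σsq := by
  have hgF : ∀ p, HasGradientAt F (gradient F p) p := fun p => (hF p).hasGradientAt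
  have hgrad0 : gradient F wtil = 0 := by
    have hloc : IsLocalMin F wtil := Filter.Eventually.of_forall (fun v => hmin v)
    rw [gradient, hloc.fderiv_eq_zero, map_zero]
  set g : EuclideanSpace ℝ (Fin d) → EuclideanSpace ℝ (Fin d) :=
    fun x => gradient F x - μ • x with hgdef
  have hgG : ∀ p, HasGradientAt (fun x => F x - μ / 2 * ‖x‖ ^ 2) (g p) p := by
    intro p
    have h1 : HasFDerivAt (fun x : EuclideanSpace ℝ (Fin d) => F x - μ / 2 * ‖x‖ ^ 2)
        ((toDual ℝ (EuclideanSpace ℝ (Fin d))) (gradient F p) - (μ / 2) • (2 • (innerSL ℝ p))) p :=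
      (hgF p).hasFDerivAt.sub (((hasStrictFDerivAt_norm_sq p).hasFDerivAt).const_mul (μ / 2))
    have h2 : (toDual ℝ (EuclideanSpace ℝ (Fin d))) (g p)
        = (toDual ℝ (EuclideanSpace ℝ (Fin d))) (gradient F p) - (μ / 2) • (2 • (innerSL ℝ p)) := by
      ext v
      simp [hgdef, inner_sub_left, real_inner_smul_left]
      ring
    rw [hasGradientAt_iff_hasFDerivAt, h2]
    exact h1
  have hgψ : ∀ p, HasGradientAt
      (fun x => (L - μ) / 2 * ‖x‖ ^ 2 - (F x - μ / 2 * ‖x‖ ^ 2)) ((L - μ) • p - g p) p := by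
    intro p
    have h1 : HasFDerivAt
        (fun x : EuclideanSpace ℝ (Fin d) => (L - μ) / 2 * ‖x‖ ^ 2 - (F x - μ / 2 * ‖x‖ ^ 2))
        (((L - μ) / 2) • (2 • (innerSL ℝ p)) -
          ((toDual ℝ (EuclideanSpace ℝ (Fin d))) (gradient F p) - (μ / 2) • (2 • (innerSL ℝ p)))) p := by
      refine HasFDerivAt.sub ?_ ?_
      · exact ((hasStrictFDerivAt_norm_sq p).hasFDerivAt).const_mul ((L - μ) / 2)
      · exact (hgF p).hasFDerivAt.sub (((hasStrictFDerivAt_norm_sq p).hasFDerivAt).const_mul (μ / 2))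
    have h2 : (toDual ℝ (EuclideanSpace ℝ (Fin d))) ((L - μ) • p - g p)
        = ((L - μ) / 2) • (2 • (innerSL ℝ p)) -
          ((toDual ℝ (EuclideanSpace ℝ (Fin d))) (gradient F p) - (μ / 2) • (2 • (innerSL ℝ p))) := by
      ext v
      simp [hgdef, inner_sub_left, real_inner_smul_left]
      ring
    rw [hasGradientAt_iff_hasFDerivAt, h2]
    exact h1
  have hψ : ConvexOn ℝ Set.univ
      (fun x => (L - μ) / 2 * ‖x‖ ^ 2 - (F x - μ / 2 * ‖x‖ ^ 2)) := by
    refine mono_to_convex hgψ ?_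
    intro x y
    have hv : ((L - μ) • x - g x) - ((L - μ) • y - g y)
        = L • (x - y) - (gradient F x - gradient F y) := by
      simp only [hgdef]
      module
    rw [hv, inner_sub_left, real_inner_smul_left, real_inner_self_eq_norm_sq]
    have hcs := real_inner_le_norm (gradient F x - gradient F y) (x - y)
    have hs := hSmooth x y
    nlinarith [mul_le_mul_of_nonneg_right hs (norm_nonneg (x - y))]
  have coco := cocoercivity (C := L - μ) (by linarith) hgG hSC hψ w wtil
  have mono := grad_mono hgG hSC w wtil
  set b : EuclideanSpace ℝ (Fin d) := w - η • gradient F w - wtil with hbdef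
  have hη' : η * (μ + L) ≤ 2 := by
    rw [← le_div_iff₀ (by linarith : (0:ℝ) < μ + L)] at *
    exact hη
  have hcontract : ‖b‖ ^ 2 ≤ (1 - η * μ) ^ 2 * ‖w - wtil‖ ^ 2 := by
    have hb : b = (1 - η * μ) • (w - wtil) - η • (g w - g wtil) := by
      simp only [hbdef, hgdef, hgrad0]
      module
    rw [hb, norm_sub_sq_real]
    have e1 : ‖(1 - η * μ) • (w - wtil)‖ ^ 2 = (1 - η * μ) ^ 2 * ‖w - wtil‖ ^ 2 := by
      rw [norm_smul, Real.norm_eq_abs, mul_pow, sq_abs]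
    have e2 : ⟪(1 - η * μ) • (w - wtil), η • (g w - g wtil)⟫_ℝ
        = (1 - η * μ) * η * ⟪g w - g wtil, w - wtil⟫_ℝ := by
      rw [real_inner_smul_left, real_inner_smul_right, real_inner_comm]
      ring
    have e3 : ‖η • (g w - g wtil)‖ ^ 2 = η ^ 2 * ‖g w - g wtil‖ ^ 2 := by
      rw [norm_smul, Real.norm_eq_abs, mul_pow, sq_abs]
    rw [e1, e2, e3]
    have hint1 : 0 ≤ η * ⟪g w - g wtil, w - wtil⟫_ℝ * (2 - η * (μ + L)) := by
      apply mul_nonneg (mul_nonneg hη0 mono)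
      linarith
    have hint2 := mul_le_mul_of_nonneg_left coco (sq_nonneg η)
    nlinarith [hint1, hint2]
  have hb2 : ∀ ω, w - η • (gradient F w + e ω) - wtil = b - η • e ω := by
    intro ω
    simp only [hbdef]
    module
  have hpt : (fun ω => ‖w - η • (gradient F w + e ω) - wtil‖ ^ 2)
      = fun ω => ‖b‖ ^ 2 - 2 * (η * ⟪b, e ω⟫_ℝ) + η ^ 2 * ‖e ω‖ ^ 2 := by
    funext ω
    rw [hb2 ω, norm_sub_sq_real, real_inner_smul_right, norm_smul, Real.norm_eq_abs, mul_pow,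
      sq_abs]
  have hint1 : Integrable (fun ω => η * ⟪b, e ω⟫_ℝ) := (he_int.const_inner b).const_mul η
  have hint2 : Integrable (fun ω => η ^ 2 * ‖e ω‖ ^ 2) := he_sq_int.const_mul _
  calc ∫ ω, ‖w - η • (gradient F w + e ω) - wtil‖ ^ 2
      = ∫ ω, (‖b‖ ^ 2 - 2 * (η * ⟪b, e ω⟫_ℝ) + η ^ 2 * ‖e ω‖ ^ 2) := by rw [hpt]
    _ = ‖b‖ ^ 2 - 2 * (η * ⟪b, ∫ ω, e ω⟫_ℝ) + η ^ 2 * ∫ ω, ‖e ω‖ ^ 2 := by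
        have hint3 : Integrable (fun ω => ‖b‖ ^ 2 - 2 * (η * ⟪b, e ω⟫_ℝ)) :=
          (integrable_const (‖b‖ ^ 2)).sub (hint1.const_mul 2)
        rw [integral_add hint3 hint2,
          integral_sub (integrable_const (‖b‖ ^ 2)) (hint1.const_mul 2), integral_const,
          integral_const_mul, integral_const_mul, integral_inner he_int]
        simp [measure_univ, integral_const_mul]
    _ ≤ (1 - η * μ) ^ 2 * ‖w - wtil‖ ^ 2 + η ^ 2 * σsq := by
        rw [he_mean, inner_zero_right]
        have := mul_le_mul_of_nonneg_left he_var (sq_nonneg η)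
        linarith [hcontract, this]
end

section
/- Let f_1, …, f_N : ℝ^d → ℝ be differentiable, and let p_1, …, p_N ∈ [0,1] with Σ_{m=1}^N p_m = 1. Define F(w) = (1/N)·Σ_{m=1}^N f_m(w) and F̃(w) = Σ_{m=1}^N p_m f_m(w). Suppose F̃ is μ̃-strongly convex with μ̃ > 0 and has global minimizer w̃, F has global minimizer w* (so ∇F(w*) = 0 and ∇F̃(w̃) = 0), and (1/N)·Σ_{m=1}^N ‖∇f_m(w*)‖² ≤ κ². Then ‖w̃ − w*‖ ≤ (Nκ/μ̃)·max_{1 ≤ m ≤ N} |1/N − p_m|. -/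
open InnerProductSpace

noncomputable section

local notation "⟪" x ", " y "⟫" => @inner ℝ _ _ x y

variable {E : Type*} [NormedAddCommGroup E] [InnerProductSpace ℝ E] [CompleteSpace E]

lemma line_hasDerivAt_s5 (x v : E) : HasDerivAt (fun t : ℝ => x + t • v) v 0 := by
  simpa using ((hasDerivAt_id (0:ℝ)).smul_const v).const_add x

lemma grad_line {G : E → ℝ} {g : E} (x v : E) (h : HasGradientAt G g x) :
    HasDerivAt (fun t : ℝ => G (x + t • v)) ⟪g, v⟫ 0 := by
  have h1 : HasFDerivAt G (toDual ℝ E g) (x + (0:ℝ) • v) := by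
    simpa using hasGradientAt_iff_hasFDerivAt.mp h
  have h2 := h1.comp_hasDerivAt 0 (line_hasDerivAt_s5 x v)
  simpa [toDual_apply_apply, Function.comp_def] using h2

lemma sq_line (c : ℝ) (x v : E) :
    HasDerivAt (fun t : ℝ => c / 2 * ‖x + t • v‖ ^ 2) (c * ⟪x, v⟫) 0 := by
  have h := (HasDerivAt.inner ℝ (line_hasDerivAt_s5 x v) (line_hasDerivAt_s5 x v)).const_mul (c / 2)
  simp only [zero_smul, add_zero] at h
  have heq : (fun t : ℝ => c / 2 * ⟪x + t • v, x + t • v⟫)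
      = fun t : ℝ => c / 2 * ‖x + t • v‖ ^ 2 := by
    funext t; rw [real_inner_self_eq_norm_sq]
  have hval : c / 2 * (⟪x, v⟫ + ⟪v, x⟫) = c * ⟪x, v⟫ := by
    rw [real_inner_comm v x]; ring
  rw [heq, hval] at h
  exact h

lemma convex_deriv_le {G : E → ℝ} (hconv : ConvexOn ℝ Set.univ G) (x y : E) {D : ℝ}
    (hD : HasDerivAt (fun t : ℝ => G (x + t • (y - x))) D 0) : D ≤ G y - G x := by
  have hfun : (fun t : ℝ => G (x + t • (y - x))) = G ∘ (AffineMap.lineMap x y) := by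
    funext t
    simp only [Function.comp_apply, AffineMap.lineMap_apply_module]
    congr 1
    rw [smul_sub, sub_smul, one_smul]
    abel
  have hφ : ConvexOn ℝ Set.univ (fun t : ℝ => G (x + t • (y - x))) := by
    rw [hfun]
    simpa using hconv.comp_affineMap (AffineMap.lineMap x y)
  have hs := hφ.le_slope_of_hasDerivAt (Set.mem_univ (0:ℝ)) (Set.mem_univ 1) one_pos hD
  simpa [slope_def_field] using hs

end

set_option maxHeartbeats 1000000

/-- Model-bias bound. With `F = (1/N)Σ f_m` (minimizer `w*`),
`F̃ = Σ p_m f_m` `μ̃`-strongly convex with minimizer `w̃`, and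
`(1/N)Σ‖∇f_m(w*)‖² ≤ κ²`, then `‖w̃ − w*‖ ≤ (Nκ/μ̃)·max_m |1/N − p_m|`. -/
theorem stmt_5 {d N : ℕ} (hN : 0 < N)
    (f : Fin N → EuclideanSpace ℝ (Fin d) → ℝ)
    (hf : ∀ m, Differentiable ℝ (f m))
    (p : Fin N → ℝ) (hp0 : ∀ m, 0 ≤ p m) (hp1 : ∀ m, p m ≤ 1)
    (hpsum : ∑ m, p m = 1)
    (F Ftil : EuclideanSpace ℝ (Fin d) → ℝ)
    (hF : ∀ w, F w = (1 / (N : ℝ)) * ∑ m, f m w)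
    (hFtil : ∀ w, Ftil w = ∑ m, p m * f m w)
    (μt : ℝ) (hμt : 0 < μt)
    (hSC : ConvexOn ℝ Set.univ (fun x => Ftil x - μt / 2 * ‖x‖ ^ 2))
    (wtil : EuclideanSpace ℝ (Fin d)) (hwtil : ∀ w, Ftil wtil ≤ Ftil w)
    (wstar : EuclideanSpace ℝ (Fin d)) (hwstar : ∀ w, F wstar ≤ F w)
    (κ : ℝ) (hκ0 : 0 ≤ κ)
    (hκ : (1 / (N : ℝ)) * ∑ m, ‖gradient (f m) wstar‖ ^ 2 ≤ κ ^ 2) :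
    ‖wtil - wstar‖ ≤ (N : ℝ) * κ / μt *
      (Finset.univ.sup' (Finset.univ_nonempty_iff.mpr (Fin.pos_iff_nonempty.mp hN))
        fun m => |1 / (N : ℝ) - p m|) := by
  classical
  have hNR : (0:ℝ) < (N:ℝ) := by exact_mod_cast hN
  have hFt : Ftil = fun w => ∑ m, p m * f m w := funext hFtil
  have hFe : F = fun w => (1/(N:ℝ)) * ∑ m, f m w := funext hF
  subst hFt hFe
  set g : Fin N → EuclideanSpace ℝ (Fin d) := fun m => gradient (f m) wstar with hg
  set M : ℝ := Finset.univ.sup' (Finset.univ_nonempty_iff.mpr (Fin.pos_iff_nonempty.mp hN))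
      (fun m => |1 / (N : ℝ) - p m|) with hM
  have hM0 : 0 ≤ M := by
    exact le_trans (abs_nonneg (1/(N:ℝ) - p ⟨0, hN⟩))
      (Finset.le_sup' (fun m => |1 / (N : ℝ) - p m|) (Finset.mem_univ (⟨0, hN⟩ : Fin N)))
  have hDm : ∀ m, HasFDerivAt (f m) (toDual ℝ _ (g m)) wstar := fun m =>
    hasGradientAt_iff_hasFDerivAt.mp ((hf m) wstar).hasGradientAt
  -- sum of gradients is zero
  have hFD : HasFDerivAt (fun w => (1/(N:ℝ)) * ∑ m, f m w)
      ((1/(N:ℝ)) • ∑ m, toDual ℝ _ (g m)) wstar :=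
    (HasFDerivAt.fun_sum (fun m _ => hDm m)).const_mul _
  have hmin : IsLocalMin (fun w => (1/(N:ℝ)) * ∑ m, f m w) wstar :=
    Filter.Eventually.of_forall hwstar
  have hzero := hmin.hasFDerivAt_eq_zero hFD
  have hsum0 : ∑ m, g m = 0 := by
    have hne : (1/(N:ℝ)) ≠ 0 := by positivity
    have h1 : (∑ m, toDual ℝ _ (g m)) = 0 := (smul_eq_zero.mp hzero).resolve_left hne
    have h2 : toDual ℝ _ (∑ m, g m) = 0 := by rw [map_sum]; exact h1
    exact (toDual ℝ _).map_eq_zero_iff.mp h2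
  -- gradient of Ftil at wstar
  have hGt : HasGradientAt (fun w => ∑ m, p m * f m w) (∑ m, p m • g m) wstar := by
    rw [hasGradientAt_iff_hasFDerivAt, map_sum]
    simp only [map_smul]
    exact HasFDerivAt.fun_sum fun m _ => (hDm m).const_mul (p m)
  -- gradient of Ftil at wtil is zero
  have hdiff : Differentiable ℝ (fun w => ∑ m, p m * f m w) :=
    Differentiable.fun_sum fun m _ => ((hf m).const_mul (p m))
  have hmin2 : IsLocalMin (fun w => ∑ m, p m * f m w) wtil :=
    Filter.Eventually.of_forall hwtil
  have hz2 : fderiv ℝ (fun w => ∑ m, p m * f m w) wtil = 0 :=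
    hmin2.hasFDerivAt_eq_zero (hdiff wtil).hasFDerivAt
  have hGt0 : HasGradientAt (fun w => ∑ m, p m * f m w) 0 wtil := by
    rw [hasGradientAt_iff_hasFDerivAt, map_zero, ← hz2]
    exact (hdiff wtil).hasFDerivAt
  -- strong convexity inequality
  set Δ : EuclideanSpace ℝ (Fin d) := wtil - wstar with hΔ
  set Gs : EuclideanSpace ℝ (Fin d) := ∑ m, p m • g m with hGs
  have hD1 : HasDerivAt
      (fun t : ℝ => (fun x => (∑ m, p m * f m x) - μt / 2 * ‖x‖ ^ 2) (wstar + t • (wtil - wstar)))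
      (inner ℝ Gs Δ - μt * inner ℝ wstar Δ) 0 :=
    (grad_line wstar Δ hGt).sub (sq_line μt wstar Δ)
  have hB1 := convex_deriv_le hSC wstar wtil hD1
  have hD2 : HasDerivAt
      (fun t : ℝ => (fun x => (∑ m, p m * f m x) - μt / 2 * ‖x‖ ^ 2) (wtil + t • (wstar - wtil)))
      ((inner ℝ (0:EuclideanSpace ℝ (Fin d)) (wstar - wtil) : ℝ) - μt * inner ℝ wtil (wstar - wtil)) 0 :=
    (grad_line wtil (wstar - wtil) hGt0).sub (sq_line μt wtil (wstar - wtil))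
  have hB2 := convex_deriv_le hSC wtil wstar hD2
  have hkey : μt * ‖Δ‖ ^ 2 ≤ ‖Gs‖ * ‖Δ‖ := by
    have e1 : (inner ℝ (0:EuclideanSpace ℝ (Fin d)) (wstar - wtil) : ℝ) = 0 := inner_zero_left _
    have e2 : (inner ℝ wtil (wstar - wtil) : ℝ) = - inner ℝ wtil Δ := by
      rw [hΔ, ← inner_neg_right]
      rw [neg_sub]
    have e3 : (inner ℝ wtil Δ : ℝ) - inner ℝ wstar Δ = inner ℝ Δ Δ := (inner_sub_left _ _ _).symm
    have e4 : (inner ℝ Δ Δ : ℝ) = ‖Δ‖ ^ 2 := real_inner_self_eq_norm_sq Δ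
    have hsum := add_le_add hB1 hB2
    have h5 : (inner ℝ Gs Δ : ℝ) + μt * ‖Δ‖ ^ 2 ≤ 0 := by
      rw [e1, e2] at hsum
      nlinarith [hsum, e3, e4]
    have h6 : (inner ℝ Gs (-Δ) : ℝ) ≤ ‖Gs‖ * ‖-Δ‖ := real_inner_le_norm _ _
    rw [inner_neg_right, norm_neg] at h6
    linarith
  -- bound ‖Gs‖
  have hsumsq : ∑ m, ‖g m‖ ^ 2 ≤ (N:ℝ) * κ ^ 2 := by
    have := mul_le_mul_of_nonneg_left hκ (le_of_lt hNR)
    rw [← mul_assoc, mul_one_div, div_self (ne_of_gt hNR), one_mul] at this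
    linarith
  have hS : ∑ m, ‖g m‖ ≤ (N:ℝ) * κ := by
    have h1 : (∑ m, ‖g m‖) ^ 2 ≤ (N:ℝ) * ∑ m, ‖g m‖ ^ 2 := by
      have h0 := sq_sum_le_card_mul_sum_sq (s := (Finset.univ : Finset (Fin N)))
        (f := fun m => ‖g m‖)
      simpa using h0
    have h2 : (∑ m, ‖g m‖) ^ 2 ≤ ((N:ℝ) * κ) ^ 2 := by
      calc (∑ m, ‖g m‖) ^ 2 ≤ (N:ℝ) * ∑ m, ‖g m‖ ^ 2 := h1
        _ ≤ (N:ℝ) * ((N:ℝ) * κ ^ 2) := by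
            exact mul_le_mul_of_nonneg_left hsumsq (le_of_lt hNR)
        _ = ((N:ℝ) * κ) ^ 2 := by ring
    have h3 : 0 ≤ ∑ m, ‖g m‖ := Finset.sum_nonneg fun m _ => norm_nonneg _
    nlinarith [mul_nonneg hNR.le hκ0]
  have hGnorm : ‖Gs‖ ≤ M * ((N:ℝ) * κ) := by
    have hGeq : Gs = ∑ m, (p m - 1/(N:ℝ)) • g m := by
      simp only [sub_smul, Finset.sum_sub_distrib, ← Finset.smul_sum, hsum0, smul_zero,
        sub_zero, hGs]
    rw [hGeq]
    calc ‖∑ m, (p m - 1/(N:ℝ)) • g m‖ ≤ ∑ m, ‖(p m - 1/(N:ℝ)) • g m‖ :=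
          norm_sum_le _ _
      _ = ∑ m, |p m - 1/(N:ℝ)| * ‖g m‖ := by
          simp [norm_smul, Real.norm_eq_abs]
      _ ≤ ∑ m, M * ‖g m‖ := by
          refine Finset.sum_le_sum fun m _ => ?_
          refine mul_le_mul_of_nonneg_right ?_ (norm_nonneg _)
          rw [abs_sub_comm, hM]
          exact Finset.le_sup' (fun m => |1 / (N : ℝ) - p m|) (Finset.mem_univ m)
      _ = M * ∑ m, ‖g m‖ := by rw [Finset.mul_sum]
      _ ≤ M * ((N:ℝ) * κ) := mul_le_mul_of_nonneg_left hS hM0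
  -- finish
  have h2 : μt * ‖Δ‖ ≤ M * ((N:ℝ) * κ) := by
    rcases eq_or_lt_of_le (norm_nonneg Δ) with h0 | h0
    · rw [← h0, mul_zero]
      positivity
    · have hkey2 : μt * ‖Δ‖ ^ 2 ≤ M * ((N:ℝ) * κ) * ‖Δ‖ :=
        le_trans hkey (mul_le_mul_of_nonneg_right hGnorm (norm_nonneg _))
      nlinarith
  calc ‖wtil - wstar‖ = (μt * ‖Δ‖) / μt := by field_simp; rfl
    _ ≤ (M * ((N:ℝ) * κ)) / μt := by gcongr
    _ = (N:ℝ) * κ / μt * M := by ring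
end

section
/- Let 0 < c_1 ≤ c_2 ≤ ⋯ ≤ c_N. Consider values A > 0 such that there exist γ_1, …, γ_N > 0 with γ_m·exp(−c_m·γ_m²) = A for every m (an equal-weight, i.e. zero-bias, configuration). Then: (i) such a configuration exists for A = 1/√(2·e·c_N); and (ii) no such configuration exists for any A > 1/√(2·e·c_N). Hence the maximum common weight achievable by a zero-bias configuration is 1/√(2·e·c_N), determined by the largest constant c_N (the device with the worst average path loss). -/
private lemma aux_bound (c γ : ℝ) (hc : 0 < c) :
    γ * Real.exp (-c * γ ^ 2) ≤ 1 / Real.sqrt (2 * Real.exp 1 * c) := by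
  have hE := Real.exp_pos 1
  have hpos : (0:ℝ) < 2 * Real.exp 1 * c := by positivity
  set s := Real.sqrt (2 * Real.exp 1 * c) with hs_def
  have hs : 0 < s := Real.sqrt_pos.2 hpos
  rcases le_or_gt γ 0 with h | h
  · have h1 : γ * Real.exp (-c * γ ^ 2) ≤ 0 :=
      mul_nonpos_of_nonpos_of_nonneg h (Real.exp_pos _).le
    have h2 : (0:ℝ) < 1 / s := by positivity
    linarith
  · have hsq : s ^ 2 = 2 * Real.exp 1 * c := Real.sq_sqrt hpos.le
    have hkey : 2 * c * γ ^ 2 ≤ Real.exp (2 * c * γ ^ 2 - 1) := by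
      have := Real.add_one_le_exp (2 * c * γ ^ 2 - 1)
      linarith
    have hexp : Real.exp 1 * (2 * c * γ ^ 2) ≤ Real.exp (2 * c * γ ^ 2) := by
      have h2 : Real.exp 1 * Real.exp (2 * c * γ ^ 2 - 1) = Real.exp (2 * c * γ ^ 2) := by
        rw [← Real.exp_add]; ring_nf
      calc Real.exp 1 * (2 * c * γ ^ 2)
          ≤ Real.exp 1 * Real.exp (2 * c * γ ^ 2 - 1) :=
            mul_le_mul_of_nonneg_left hkey hE.le
        _ = _ := h2
    have hEpos := Real.exp_pos (c * γ ^ 2)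
    have hmain : γ * s ≤ Real.exp (c * γ ^ 2) := by
      have hns : (0:ℝ) ≤ γ * s := by positivity
      have hsqle : (γ * s) ^ 2 ≤ Real.exp (c * γ ^ 2) ^ 2 := by
        have hE2 : Real.exp (c * γ ^ 2) ^ 2 = Real.exp (2 * c * γ ^ 2) := by
          rw [← Real.exp_nat_mul]; ring_nf
        rw [hE2, mul_pow, hsq]
        nlinarith [hexp]
      nlinarith [hsqle, hns, hEpos.le]
    rw [neg_mul, Real.exp_neg, le_div_iff₀ hs]
    calc γ * (Real.exp (c * γ ^ 2))⁻¹ * s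
        = (γ * s) * (Real.exp (c * γ ^ 2))⁻¹ := by ring
      _ ≤ Real.exp (c * γ ^ 2) * (Real.exp (c * γ ^ 2))⁻¹ :=
          mul_le_mul_of_nonneg_right hmain (inv_nonneg.2 hEpos.le)
      _ = 1 := mul_inv_cancel₀ hEpos.ne'

private lemma aux_peak (c : ℝ) (hc : 0 < c) :
    Real.sqrt (1 / (2 * c)) *
      Real.exp (-c * (Real.sqrt (1 / (2 * c))) ^ 2) =
      1 / Real.sqrt (2 * Real.exp 1 * c) := by
  have h2c : (0:ℝ) < 2 * c := by linarith
  have hE := Real.exp_pos 1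
  have hx : (Real.sqrt (1 / (2 * c))) ^ 2 = 1 / (2 * c) :=
    Real.sq_sqrt (by positivity)
  rw [hx]
  have harg : -c * (1 / (2 * c)) = -(1/2) := by field_simp
  rw [harg]
  have hsplit : Real.sqrt (2 * Real.exp 1 * c) =
      Real.sqrt (Real.exp 1) * Real.sqrt (2 * c) := by
    rw [← Real.sqrt_mul (Real.exp_pos 1).le]; ring_nf
  have hexp : Real.exp (-(1/2)) = (Real.sqrt (Real.exp 1))⁻¹ := by
    rw [Real.exp_neg, ← Real.exp_half]
  rw [hsplit, hexp, one_div, Real.sqrt_inv, one_div, mul_inv]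
  ring

/-- For `0 < c_1 ≤ ⋯ ≤ c_N`, a zero-bias (equal-weight) configuration
`γ_m > 0` with `γ_m·exp(−c_m γ_m²) = A` for all `m` exists for `A = 1/√(2e·c_N)`,
and does not exist for any `A > 1/√(2e·c_N)`; the worst (largest) constant `c_N`
determines the maximal common weight. -/
theorem stmt_11 (N : ℕ) (hN : 0 < N) (c : Fin N → ℝ)
    (hc0 : ∀ m, 0 < c m) (hmono : Monotone c) :
    (∃ γ : Fin N → ℝ, ∀ m, 0 < γ m ∧
      γ m * Real.exp (-c m * (γ m) ^ 2) =
        1 / Real.sqrt (2 * Real.exp 1 * c ⟨N - 1, Nat.sub_lt hN one_pos⟩)) ∧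
    (∀ A : ℝ, 1 / Real.sqrt (2 * Real.exp 1 * c ⟨N - 1, Nat.sub_lt hN one_pos⟩) < A →
      ¬ ∃ γ : Fin N → ℝ, ∀ m, 0 < γ m ∧ γ m * Real.exp (-c m * (γ m) ^ 2) = A) := by
  set last : Fin N := ⟨N - 1, Nat.sub_lt hN one_pos⟩ with hlast
  set A0 : ℝ := 1 / Real.sqrt (2 * Real.exp 1 * c last) with hA0
  have hclast : 0 < c last := hc0 last
  have hA0pos : 0 < A0 := by
    rw [hA0]; positivity
  constructor
  · -- existence
    have hex : ∀ m : Fin N, ∃ g : ℝ, 0 < g ∧ g * Real.exp (-c m * g ^ 2) = A0 := by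
      intro m
      have hcm : 0 < c m := hc0 m
      have hle : c m ≤ c last := by
        apply hmono
        rw [Fin.le_def]
        have := m.isLt
        simp only [hlast]
        omega
      set x0 : ℝ := Real.sqrt (1 / (2 * c m)) with hx0
      have hfx0 : x0 * Real.exp (-c m * x0 ^ 2) = 1 / Real.sqrt (2 * Real.exp 1 * c m) :=
        aux_peak (c m) hcm
      have hA0le : A0 ≤ x0 * Real.exp (-c m * x0 ^ 2) := by
        rw [hfx0, hA0]
        apply one_div_le_one_div_of_le
        · positivity
        · apply Real.sqrt_le_sqrt
          nlinarith [Real.exp_pos 1]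
      have hx0pos : 0 < x0 := Real.sqrt_pos.2 (by positivity)
      have hcont : ContinuousOn (fun g : ℝ => g * Real.exp (-c m * g ^ 2)) (Set.Icc 0 x0) :=
        (continuous_id.mul ((Real.continuous_exp.comp (by continuity)))).continuousOn
      have hIVT := intermediate_value_Icc hx0pos.le hcont
      have hmem : A0 ∈ Set.Icc ((fun g : ℝ => g * Real.exp (-c m * g ^ 2)) 0)
          ((fun g : ℝ => g * Real.exp (-c m * g ^ 2)) x0) := by
        constructor
        · simp [hA0pos.le]
        · exact hA0le
      obtain ⟨g, hgmem, hgeq⟩ := hIVT hmem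
      refine ⟨g, ?_, hgeq⟩
      rcases lt_or_eq_of_le hgmem.1 with h | h
      · exact h
      · exfalso; simp [← h] at hgeq; linarith
    choose γ hγ using hex
    exact ⟨γ, fun m => ⟨(hγ m).1, (hγ m).2⟩⟩
  · -- impossibility
    intro A hA ⟨γ, hγ⟩
    have h1 := (hγ last).2
    have h2 := aux_bound (c last) (γ last) hclast
    rw [h1] at h2
    exact absurd h2 (not_le.2 hA)
end
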